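/- Let Y be a finite nonempty set, ε ∈ (0, 1/2], L a positive integer, and m : {1,...,L} × Y → [0,1] a cost function (with m(l,y) denoting the cost of y at round l). Define weights w(1,y) = 1 and w(l+1,y) = exp(-ε · Σ_{l'=1}^{l} m(l',y)), and mixed strategies f(l,y) = w(l,y) / Σ_{y'∈Y} w(l,y'). Then for every y ∈ Y: (1-ε) · Σ_{l=1}^{L} Σ_{y'∈Y} f(l,y')·m(l,y') ≤ Σ_{l=1}^{L} m(l,y) + (ln |Y|)/ε. -/
import Mathlib

open Finset in
lemma mwu_exp_aux (ε x : ℝ) (hε0 : 0 < ε) (hε1 : ε ≤ 1) (hx0 : 0 ≤ x) (hx1 : x ≤ 1) :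
    Real.exp (-(ε * x)) ≤ 1 - ε * (1 - ε) * x := by
  have h1 : ε * x + 1 ≤ Real.exp (ε * x) := Real.add_one_le_exp _
  have h2 : Real.exp (-(ε * x)) * Real.exp (ε * x) = 1 := by
    rw [← Real.exp_add]; simp
  have h3 : 0 < Real.exp (-(ε * x)) := Real.exp_pos _
  nlinarith [mul_le_mul_of_nonneg_left h1 h3.le, mul_nonneg (mul_nonneg hε0.le hε0.le) hx0,
    mul_nonneg hε0.le hx0]

open Finset in
/-- Regret bound for the Hedge (multiplicative weight update) algorithm. -/
theorem mwu_regret_bound {Y : Type*} [Fintype Y] [Nonempty Y]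
    (ε : ℝ) (hε0 : 0 < ε) (hε1 : ε ≤ 1/2)
    (L : ℕ) (hL : 0 < L)
    (m : Fin L → Y → ℝ) (hm0 : ∀ l y, 0 ≤ m l y) (hm1 : ∀ l y, m l y ≤ 1)
    (w : Fin L → Y → ℝ)
    (hw : ∀ l y, w l y = Real.exp (-ε * ∑ l' ∈ univ.filter (fun l' : Fin L => l' < l), m l' y))
    (f : Fin L → Y → ℝ)
    (hf : ∀ l y, f l y = w l y / ∑ y' : Y, w l y') :
    ∀ y : Y,
      (1 - ε) * ∑ l : Fin L, ∑ y' : Y, f l y' * m l y' ≤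
        (∑ l : Fin L, m l y) + Real.log (Fintype.card Y) / ε := by
  intro y
  set C : ℝ := (Fintype.card Y : ℝ) with hC
  have hCpos : (0 : ℝ) < C := by
    rw [hC]; exact_mod_cast Fintype.card_pos
  set m' : ℕ → Y → ℝ := fun k z => if h : k < L then m ⟨k, h⟩ z else 0 with hm'
  set S : ℕ → Y → ℝ := fun n z => ∑ k ∈ Finset.range n, m' k z with hS
  set G : ℕ → ℝ := fun k =>
    if h : k < L then ∑ z : Y, f ⟨k, h⟩ z * m ⟨k, h⟩ z else 0 with hG
  set Φ : ℕ → ℝ := fun n => ∑ z : Y, Real.exp (-ε * S n z) with hΦ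
  have hm'eq : ∀ (l : Fin L) z, m' (l : ℕ) z = m l z := by
    intro l z
    simp [hm', l.isLt]
  have haux : ∀ (l : Fin L) z,
      (∑ l' ∈ univ.filter (fun l' : Fin L => l' < l), m l' z) = S (l : ℕ) z := by
    intro l z
    rw [Finset.sum_filter]
    have h1 : ∀ l' : Fin L, (if l' < l then m l' z else 0)
        = (fun k : ℕ => if k < (l : ℕ) then m' k z else 0) (l' : ℕ) := by
      intro l'
      simp only [Fin.lt_def, hm'eq]
    rw [Finset.sum_congr rfl (fun l' _ => h1 l')]
    rw [Fin.sum_univ_eq_sum_range (fun k : ℕ => if k < (l : ℕ) then m' k z else 0) L]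
    rw [← Finset.sum_filter]
    have h2 : (Finset.range L).filter (fun k => k < (l : ℕ)) = Finset.range (l : ℕ) := by
      ext k
      simp only [Finset.mem_filter, Finset.mem_range]
      have := l.isLt
      omega
    rw [h2]
  have key : ∀ n, n ≤ L → Φ n ≤ C * Real.exp (-(ε * (1 - ε)) * ∑ k ∈ Finset.range n, G k) := by
    intro n
    induction n with
    | zero =>
      intro _
      simp [hΦ, hS, hC]
    | succ n ih =>
      intro hn1
      have hnL : n < L := hn1
      have ihh := ih (le_of_lt hnL)
      have hm'n : ∀ z, m' n z = m ⟨n, hnL⟩ z := by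
        intro z; simp [hm', hnL]
      have hwn : ∀ z, w ⟨n, hnL⟩ z = Real.exp (-ε * S n z) := by
        intro z
        rw [hw, haux]
      have hΦpos : 0 < Φ n := by
        simp only [hΦ]
        exact Finset.sum_pos (fun z _ => Real.exp_pos _) Finset.univ_nonempty
      have hWsum : ∑ z' : Y, w ⟨n, hnL⟩ z' = Φ n := by
        simp only [hΦ]; exact Finset.sum_congr rfl fun z' _ => hwn z'
      have hGn : G n = (∑ z : Y, Real.exp (-ε * S n z) * m' n z) / Φ n := by
        simp only [hG, dif_pos hnL]
        rw [Finset.sum_div]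
        refine Finset.sum_congr rfl fun z _ => ?_
        rw [hf, hWsum, hwn, hm'n z]
        ring
      have hsum : ∑ z : Y, Real.exp (-ε * S n z) * m' n z = Φ n * G n := by
        rw [hGn, mul_div_cancel₀ _ hΦpos.ne']
      have hstep1 : Φ (n + 1) = ∑ z : Y, Real.exp (-ε * S n z) * Real.exp (-(ε * m' n z)) := by
        simp only [hΦ]
        refine Finset.sum_congr rfl fun z _ => ?_
        rw [← Real.exp_add]
        congr 1
        simp only [hS, Finset.sum_range_succ]
        ring
      have hstep2 : ∑ z : Y, Real.exp (-ε * S n z) * Real.exp (-(ε * m' n z))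
          ≤ ∑ z : Y, Real.exp (-ε * S n z) * (1 - ε * (1 - ε) * m' n z) := by
        refine Finset.sum_le_sum fun z _ => ?_
        refine mul_le_mul_of_nonneg_left ?_ (Real.exp_pos _).le
        refine mwu_exp_aux ε (m' n z) hε0 (by linarith) ?_ ?_
        · rw [hm'n z]; exact hm0 _ _
        · rw [hm'n z]; exact hm1 _ _
      have hstep3 : ∑ z : Y, Real.exp (-ε * S n z) * (1 - ε * (1 - ε) * m' n z)
          = Φ n * (1 - ε * (1 - ε) * G n) := by
        have h5 : ∑ z : Y, Real.exp (-ε * S n z) * (1 - ε * (1 - ε) * m' n z)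
            = Φ n - ε * (1 - ε) * (∑ z : Y, Real.exp (-ε * S n z) * m' n z) := by
          simp only [hΦ]
          rw [Finset.mul_sum, ← Finset.sum_sub_distrib]
          refine Finset.sum_congr rfl fun z _ => ?_
          ring
        rw [h5, hsum]
        ring
      have hstep4 : Φ n * (1 - ε * (1 - ε) * G n) ≤ Φ n * Real.exp (-(ε * (1 - ε) * G n)) := by
        refine mul_le_mul_of_nonneg_left ?_ hΦpos.le
        have := Real.add_one_le_exp (-(ε * (1 - ε) * G n))
        linarith
      calc Φ (n + 1) = ∑ z : Y, Real.exp (-ε * S n z) * Real.exp (-(ε * m' n z)) := hstep1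
        _ ≤ ∑ z : Y, Real.exp (-ε * S n z) * (1 - ε * (1 - ε) * m' n z) := hstep2
        _ = Φ n * (1 - ε * (1 - ε) * G n) := hstep3
        _ ≤ Φ n * Real.exp (-(ε * (1 - ε) * G n)) := hstep4
        _ ≤ (C * Real.exp (-(ε * (1 - ε)) * ∑ k ∈ Finset.range n, G k))
              * Real.exp (-(ε * (1 - ε) * G n)) :=
            mul_le_mul_of_nonneg_right ihh (Real.exp_pos _).le
        _ = C * Real.exp (-(ε * (1 - ε)) * ∑ k ∈ Finset.range (n + 1), G k) := by
            rw [mul_assoc, ← Real.exp_add, Finset.sum_range_succ]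
            ring_nf
  set T : ℝ := ∑ k ∈ Finset.range L, G k with hT
  have hSL : (∑ l : Fin L, m l y) = S L y := by
    have h1 : ∀ l : Fin L, m l y = (fun k : ℕ => m' k y) (l : ℕ) := fun l => (hm'eq l y).symm
    rw [Finset.sum_congr rfl fun l _ => h1 l,
      Fin.sum_univ_eq_sum_range (fun k : ℕ => m' k y) L]
  have hTf : (∑ l : Fin L, ∑ y' : Y, f l y' * m l y') = T := by
    rw [hT]
    have h1 : ∀ l : Fin L, (∑ y' : Y, f l y' * m l y') = (fun k : ℕ => G k) (l : ℕ) := by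
      intro l
      simp [hG, l.isLt]
    rw [Finset.sum_congr rfl fun l _ => h1 l, Fin.sum_univ_eq_sum_range (fun k : ℕ => G k) L]
  have h1 : Real.exp (-ε * S L y) ≤ Φ L := by
    simp only [hΦ]
    exact Finset.single_le_sum (f := fun z => Real.exp (-ε * S L z))
      (fun z _ => (Real.exp_pos _).le) (Finset.mem_univ y)
  have h3 : Real.exp (-ε * S L y) ≤ C * Real.exp (-(ε * (1 - ε)) * T) :=
    h1.trans (key L le_rfl)
  have hlog : -ε * S L y ≤ Real.log C + -(ε * (1 - ε)) * T := by
    have h6 := Real.log_le_log (Real.exp_pos _) h3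
    rwa [Real.log_exp, Real.log_mul hCpos.ne' (Real.exp_ne_zero _), Real.log_exp] at h6
  rw [hSL, hTf]
  have h4 : ε * (Real.log C / ε) = Real.log C := mul_div_cancel₀ _ hε0.ne'
  have hfinal : ε * ((1 - ε) * T) ≤ ε * (S L y + Real.log C / ε) := by
    nlinarith [hlog, h4]
  exact le_of_mul_le_mul_left hfinal hε0
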